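/- Let G be a topological group acting continuously on a topological space P, and let f : P → X be a proper continuous map which is invariant under the action, i.e. f(g • p) = f(p) for all g ∈ G and p ∈ P. Assume X is Hausdorff and weakly locally compact. Then the induced continuous map f̄ : P/G → X on the orbit space, characterized by f̄ ∘ q = f where q : P → P/G is the quotient projection, is a proper map. -/

import Mathlib

/-- If a proper continuous map `f : P → X` is invariant under a continuous action of a
topological group `G` on `P`, and `X` is Hausdorff and weakly locally compact, then the
induced continuous map `f̄ : P/G → X` on the orbit space (characterized by `f̄ ∘ q = f`,
where `q` is the quotient projection) is proper. -/
theorem induced_map_on_orbit_space_isProperMap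
    {G P X : Type*} [Group G] [TopologicalSpace G] [IsTopologicalGroup G]
    [TopologicalSpace P] [MulAction G P] [ContinuousSMul G P]
    [TopologicalSpace X] [T2Space X] [WeaklyLocallyCompactSpace X]
    (f : P → X) (hf : IsProperMap f)
    (hinv : ∀ (g : G) (p : P), f (g • p) = f p)
    (fbar : Quotient (MulAction.orbitRel G P) → X)
    (hfbar : ∀ p : P, fbar (Quotient.mk (MulAction.orbitRel G P) p) = f p) :
    IsProperMap fbar := by
  have hcomp : fbar ∘ Quotient.mk (MulAction.orbitRel G P) = f := funext hfbar
  have hcont : Continuous fbar := by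
    rw [isQuotientMap_quotient_mk'.continuous_iff]
    exact hcomp ▸ hf.continuous
  rw [isProperMap_iff_isCompact_preimage]
  refine ⟨hcont, fun {K} hK => ?_⟩
  have : fbar ⁻¹' K = Quotient.mk (MulAction.orbitRel G P) '' (f ⁻¹' K) := by
    ext q
    obtain ⟨p, rfl⟩ := Quotient.exists_rep q
    simp only [Set.mem_preimage, Set.mem_image]
    constructor
    · intro h
      exact ⟨p, by rwa [← hfbar], rfl⟩
    · rintro ⟨p', hp', hpq⟩
      rw [← hpq, hfbar]
      exact hp'
  rw [this]
  exact ((hf.isCompact_preimage hK).image continuous_quot_mk)
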